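/- Let χ : [a, a+1] → ℂ be continuous with polar form χ = |χ|e^{iη}, η of class C¹. Then ∫ₐ^{a+1}|χ| dx ≤ |∫ₐ^{a+1} χ(y) dy| + (∫ₐ^{a+1}|η'(y)| dy)·sup_{a≤y≤a+1}|∫ₐ^y χ(y') dy'|. -/

import Mathlib

open Topology Filter


open intervalIntegral in
theorem stmt10 (a : ℝ) (χ : ℝ → ℂ) (η η' : ℝ → ℝ)
    (hχ : ContinuousOn χ (Set.Icc a (a + 1)))
    (hne : ∀ x ∈ Set.Icc a (a + 1), χ x ≠ 0)
    (hpolar : ∀ x ∈ Set.Icc a (a + 1),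
      χ x = (‖χ x‖ : ℂ) * Complex.exp (Complex.I * η x))
    (hη : ∀ x ∈ Set.Icc a (a + 1), HasDerivAt η (η' x) x)
    (hη' : ContinuousOn η' (Set.Icc a (a + 1))) :
    (∫ x in a..(a + 1), ‖χ x‖) ≤
      ‖∫ y in a..(a + 1), χ y‖ +
        (∫ y in a..(a + 1), |η' y|) *
          sSup ((fun y => ‖∫ t in a..y, χ t‖) '' Set.Icc a (a + 1)) := by
  have hab : a ≤ a + 1 := by linarith
  have huIcc : Set.uIcc a (a + 1) = Set.Icc a (a + 1) := Set.uIcc_of_le hab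
  set G : ℝ → ℂ := fun x => ∫ t in a..x, χ t with hGdef
  set F : ℝ → ℂ := fun x => Complex.exp (-(Complex.I * η x)) with hFdef
  set M : ℝ := sSup ((fun y => ‖∫ t in a..y, χ t‖) '' Set.Icc a (a + 1)) with hMdef
  -- continuity facts
  have hηc : ContinuousOn η (Set.Icc a (a + 1)) := fun x hx =>
    (hη x hx).continuousAt.continuousWithinAt
  have hFc : ContinuousOn F (Set.Icc a (a + 1)) :=
    Complex.continuous_exp.comp_continuousOn
      ((continuousOn_const.mul (Complex.continuous_ofReal.comp_continuousOn hηc)).neg)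
  have hGc : ContinuousOn G (Set.Icc a (a + 1)) := by
    have := intervalIntegral.continuousOn_primitive_interval
      (μ := MeasureTheory.volume) (f := χ) (a := a) (b := a + 1)
      (by rw [huIcc]; exact hχ.integrableOn_Icc)
    rwa [huIcc] at this
  have hnormF : ∀ x : ℝ, ‖F x‖ = 1 := by
    intro x
    rw [hFdef]
    simp [Complex.norm_exp]
  -- derivative of F
  have hFd : ∀ x ∈ Set.Icc a (a + 1),
      HasDerivAt F ((-(Complex.I * η' x)) * F x) x := by
    intro x hx
    have h1 : HasDerivAt (fun y : ℝ => -(Complex.I * (η y : ℂ)))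
        (-(Complex.I * (η' x : ℂ))) x := (((hη x hx).ofReal_comp).const_mul Complex.I).neg
    simpa [mul_comm] using h1.cexp
  -- derivative of G on the open interval
  have hGd : ∀ x ∈ Set.Ioo a (a + 1), HasDerivAt G (χ x) x := by
    intro x hx
    have hxI : x ∈ Set.Icc a (a + 1) := Set.Ioo_subset_Icc_self hx
    have hcx : ContinuousAt χ x :=
      (hχ.mono Set.Ioo_subset_Icc_self).continuousAt (Ioo_mem_nhds hx.1 hx.2)
    have hmeas : StronglyMeasurableAtFilter χ (𝓝 x) MeasureTheory.volume :=
      (hχ.mono Set.Ioo_subset_Icc_self).stronglyMeasurableAtFilter isOpen_Ioo x hx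
    have hint : IntervalIntegrable χ MeasureTheory.volume a x :=
      (hχ.mono (Set.Icc_subset_Icc le_rfl hx.2.le)).intervalIntegrable_of_Icc hx.1.le
    exact intervalIntegral.integral_hasDerivAt_right hint hmeas hcx
  -- key pointwise identity
  have habs : ∀ x ∈ Set.Icc a (a + 1), F x * χ x = (‖χ x‖ : ℂ) := by
    intro x hx
    nth_rewrite 1 [hpolar x hx]
    rw [mul_left_comm, ← Complex.exp_add, neg_add_cancel, Complex.exp_zero, mul_one]
  -- integrability of the pieces
  have hPc : ContinuousOn (fun x => (-(Complex.I * η' x)) * F x * G x)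
      (Set.Icc a (a + 1)) :=
    ((continuousOn_const.mul (Complex.continuous_ofReal.comp_continuousOn hη')).neg.mul
      hFc).mul hGc
  have hPint : IntervalIntegrable (fun x => (-(Complex.I * η' x)) * F x * G x)
      MeasureTheory.volume a (a + 1) := hPc.intervalIntegrable_of_Icc hab
  have hFχint : IntervalIntegrable (fun x => F x * χ x)
      MeasureTheory.volume a (a + 1) := (hFc.mul hχ).intervalIntegrable_of_Icc hab
  -- integration by parts
  have key : (∫ x in a..(a + 1),
      ((-(Complex.I * η' x)) * F x * G x + F x * χ x)) =
      F (a + 1) * G (a + 1) - F a * G a := by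
    apply intervalIntegral.integral_eq_sub_of_hasDeriv_right_of_le hab (hFc.mul hGc)
    · intro x hx
      exact (((hFd x (Set.Ioo_subset_Icc_self hx)).mul (hGd x hx))).hasDerivWithinAt
    · exact hPint.add hFχint
  have hGa : G a = 0 := intervalIntegral.integral_same
  have hsplit : (∫ x in a..(a + 1),
      ((-(Complex.I * η' x)) * F x * G x + F x * χ x)) =
      (∫ x in a..(a + 1), (-(Complex.I * η' x)) * F x * G x) +
      (∫ x in a..(a + 1), F x * χ x) :=
    intervalIntegral.integral_add hPint hFχint
  have hFχ : (∫ x in a..(a + 1), F x * χ x) =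
      F (a + 1) * G (a + 1) - (∫ x in a..(a + 1), (-(Complex.I * η' x)) * F x * G x) := by
    rw [hsplit, hGa, mul_zero, sub_zero] at key
    exact eq_sub_of_add_eq' key
  -- express the real integral as the real part of the complex one
  have hcast : ((∫ x in a..(a + 1), ‖χ x‖ : ℝ) : ℂ) =
      ∫ x in a..(a + 1), F x * χ x := by
    rw [← intervalIntegral.integral_ofReal]
    apply intervalIntegral.integral_congr
    intro x hx
    rw [huIcc] at hx
    exact (habs x hx).symm
  -- bound M
  have hMbd : ∀ x ∈ Set.Icc a (a + 1), ‖G x‖ ≤ M := by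
    intro x hx
    apply le_csSup
    · exact (isCompact_Icc.image_of_continuousOn (continuous_norm.comp_continuousOn hGc)).bddAbove
    · exact Set.mem_image_of_mem _ hx
  -- main estimate
  have hre : (∫ x in a..(a + 1), ‖χ x‖) ≤
      ‖F (a + 1) * G (a + 1) - (∫ x in a..(a + 1), (-(Complex.I * η' x)) * F x * G x)‖ := by
    have : (∫ x in a..(a + 1), ‖χ x‖) =
        (((∫ x in a..(a + 1), ‖χ x‖ : ℝ) : ℂ)).re := by simp
    rw [this, hcast, hFχ]
    exact (Complex.re_le_norm _)
  have h1 : ‖F (a + 1) * G (a + 1)‖ = ‖∫ y in a..(a + 1), χ y‖ := by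
    rw [norm_mul]
    have : ‖F (a + 1)‖ = 1 := hnormF (a + 1)
    rw [this, one_mul]
  have h2 : ‖∫ x in a..(a + 1), (-(Complex.I * η' x)) * F x * G x‖ ≤
      (∫ y in a..(a + 1), |η' y|) * M := by
    calc ‖∫ x in a..(a + 1), (-(Complex.I * η' x)) * F x * G x‖
        ≤ ∫ x in a..(a + 1), ‖(-(Complex.I * η' x)) * F x * G x‖ :=
          intervalIntegral.norm_integral_le_integral_norm hab
      _ ≤ ∫ x in a..(a + 1), |η' x| * M := by
          apply intervalIntegral.integral_mono_on hab
          · exact (hPc.norm).intervalIntegrable_of_Icc hab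
          · exact ((continuous_abs.comp_continuousOn hη').mul
              continuousOn_const).intervalIntegrable_of_Icc hab
          · intro x hx
            have : ‖(-(Complex.I * η' x)) * F x * G x‖ = |η' x| * ‖G x‖ := by
              have hF1 : ‖F x‖ = 1 := by exact hnormF x
              rw [norm_mul, norm_mul, norm_neg, norm_mul, Complex.norm_I, one_mul, hF1,
                mul_one, Complex.norm_real, Real.norm_eq_abs]
            rw [this]
            have hGle := hMbd x hx
            exact mul_le_mul_of_nonneg_left hGle (abs_nonneg _)
      _ = (∫ y in a..(a + 1), |η' y|) * M := by
          rw [intervalIntegral.integral_mul_const]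
  calc (∫ x in a..(a + 1), ‖χ x‖)
      ≤ ‖F (a + 1) * G (a + 1) - (∫ x in a..(a + 1), (-(Complex.I * η' x)) * F x * G x)‖ := hre
    _ ≤ ‖F (a + 1) * G (a + 1)‖ +
        ‖∫ x in a..(a + 1), (-(Complex.I * η' x)) * F x * G x‖ := norm_sub_le _ _
    _ ≤ ‖∫ y in a..(a + 1), χ y‖ + (∫ y in a..(a + 1), |η' y|) * M := by
        rw [h1]; exact add_le_add_right h2 _
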